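/- Let a, b > 0 be real numbers, let m ≥ 1 be a natural number, and let t be a natural number with 1 ≤ t ≤ m + 1. Then C(m, t)·a^t + C(m, t−1)·a^{t−1}·b ≤ C(m+1, t)·((m·a + b)/(m + 1))^t. -/

import Mathlib

open Real

/-- Weighted AM-GM specialized: `a^(t-1) * u ≤ (((t-1)a + u)/t)^t`. -/
lemma amgm_aux (a u : ℝ) (ha : 0 < a) (hu : 0 < u) (t : ℕ) (ht : 1 ≤ t) :
    a ^ (t - 1) * u ≤ ((((t : ℝ) - 1) * a + u) / t) ^ t := by
  have hT : (0:ℝ) < t := by exact_mod_cast ht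
  set w₁ : ℝ := ((t : ℝ) - 1) / t with hw1
  set w₂ : ℝ := 1 / t with hw2
  have hw₁ : 0 ≤ w₁ := by
    apply div_nonneg _ hT.le
    have : (1:ℝ) ≤ t := by exact_mod_cast ht
    linarith
  have hw₂ : 0 ≤ w₂ := by positivity
  have hsum : w₁ + w₂ = 1 := by rw [hw1, hw2]; field_simp; ring
  have h := Real.geom_mean_le_arith_mean2_weighted hw₁ hw₂ ha.le hu.le hsum
  have h2 := Real.rpow_le_rpow (by positivity) h (le_of_lt hT)
  have hL : (a ^ w₁ * u ^ w₂) ^ (t:ℝ) = a ^ (t - 1) * u := by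
    rw [Real.mul_rpow (Real.rpow_nonneg ha.le _) (Real.rpow_nonneg hu.le _),
      ← Real.rpow_mul ha.le, ← Real.rpow_mul hu.le]
    have e1 : w₁ * (t:ℝ) = ((t - 1 : ℕ) : ℝ) := by
      rw [hw1, Nat.cast_sub ht]
      push_cast
      field_simp
    have e2 : w₂ * (t:ℝ) = 1 := by rw [hw2]; field_simp
    rw [e1, e2, Real.rpow_natCast, Real.rpow_one]
  have hR : (w₁ * a + w₂ * u) ^ (t:ℝ) = ((((t : ℝ) - 1) * a + u) / t) ^ t := by
    rw [← Real.rpow_natCast]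
    congr 1
    rw [hw1, hw2]
    field_simp
  rw [hL, hR] at h2
  exact h2

/-- Base case (n = 1) of the paper's polynomial-coefficient lemma: the coefficient of
`z^t` in `(1 + a·z)^m (1 + b·z)` is dominated by the coefficient of `z^t` in
`(1 + ((m·a + b)/(m+1))·z)^{m+1}`. -/
theorem coeff_base_case (a b : ℝ) (ha : 0 < a) (hb : 0 < b)
    (m : ℕ) (hm : 1 ≤ m) (t : ℕ) (ht1 : 1 ≤ t) (ht2 : t ≤ m + 1) :
    (m.choose t : ℝ) * a ^ t + (m.choose (t - 1) : ℝ) * a ^ (t - 1) * b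
      ≤ ((m + 1).choose t : ℝ) * (((m : ℝ) * a + b) / ((m : ℝ) + 1)) ^ t := by
  have hM : (0:ℝ) < (m:ℝ) + 1 := by positivity
  have hT : (0:ℝ) < t := by exact_mod_cast ht1
  set N : ℝ := ((m + 1).choose t : ℝ) with hN
  have hNpos : 0 < N := by
    rw [hN]
    exact_mod_cast Nat.choose_pos ht2
  -- identity 1 : (C(m,t) : ℝ) = N * (m+1-t) / (m+1)
  have hid1 : (m.choose t : ℝ) * ((m:ℝ) + 1) = N * ((m:ℝ) + 1 - t) := by
    have h := Nat.choose_mul_succ_eq m t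
    have hcast : ((m.choose t * (m + 1) : ℕ) : ℝ) = (((m+1).choose t * (m + 1 - t) : ℕ) : ℝ) := by
      exact_mod_cast congrArg (Nat.cast (R := ℝ)) h
    push_cast [Nat.cast_sub ht2] at hcast
    rw [hN]
    linarith
  -- identity 2 : (m+1) * C(m,t-1) = N * t
  have hid2 : ((m:ℝ) + 1) * (m.choose (t-1) : ℝ) = N * t := by
    have h := Nat.add_one_mul_choose_eq m (t - 1)
    have ht' : t - 1 + 1 = t := Nat.succ_pred_eq_of_pos ht1
    rw [ht'] at h
    have hcast : (((m+1) * m.choose (t-1) : ℕ) : ℝ) = (((m+1).choose t * t : ℕ) : ℝ) := by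
      exact_mod_cast congrArg (Nat.cast (R := ℝ)) h
    push_cast at hcast
    rw [hN]; linarith
  -- define u
  set u : ℝ := (((m:ℝ) + 1 - t) * a + t * b) / ((m:ℝ) + 1) with hu
  have hu_pos : 0 < u := by
    apply div_pos _ hM
    have h1 : (0:ℝ) ≤ ((m:ℝ) + 1 - t) * a := by
      apply mul_nonneg _ ha.le
      have : (t:ℝ) ≤ (m:ℝ) + 1 := by exact_mod_cast ht2
      linarith
    nlinarith
  -- LHS = N * a^(t-1) * u
  have hLHS : (m.choose t : ℝ) * a ^ t + (m.choose (t - 1) : ℝ) * a ^ (t - 1) * b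
      = N * (a ^ (t-1) * u) := by
    have hpow : a ^ t = a ^ (t - 1) * a := by
      conv_rhs => rw [← pow_succ, Nat.sub_add_cancel ht1]
    rw [hpow, hu]
    have hu' : ((((m:ℝ) + 1 - t) * a + t * b) / ((m:ℝ) + 1)) * ((m:ℝ) + 1)
        = ((m:ℝ) + 1 - t) * a + t * b := div_mul_cancel₀ _ hM.ne'
    apply mul_right_cancel₀ hM.ne'
    linear_combination (a ^ (t - 1) * a) * hid1 + (a ^ (t - 1) * b) * hid2 - N * a ^ (t - 1) * hu'
  -- key: ((t-1)*a + u)/t = (m*a+b)/(m+1)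
  have hc : (((t : ℝ) - 1) * a + u) / t = ((m : ℝ) * a + b) / ((m : ℝ) + 1) := by
    rw [hu]
    field_simp
    ring
  rw [hLHS, ← hc]
  exact mul_le_mul_of_nonneg_left (amgm_aux a u ha hu_pos t ht1) hNpos.le
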